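/- Let λ₁, λ₂ : [0,1] → [0,1] be continuous with λ₁(0)=0, λ₁(1)=1, λ₂(0)=1, λ₂(1)=0 and let k₁ > k₂ ≥ 0 be real numbers. Define T : C[0,1] → C[0,1] by T(f) = (k₁ f∘λ₁ + k₂ f∘λ₂)/(k₁+k₂). Then T is a unital positive linear map, and T sends C[0,1]_{(a,k)} into C[0,1]_{(b,k)}, where b = (k₁a + k₂a + k₂k)/(k₁ − k₂). -/

import Mathlib

open ContinuousMap

theorem stmt7 (a k : ℕ) (ha : 0 < a) (hk : 0 < k)
    (l₁ l₂ : C(unitInterval, unitInterval))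
    (hl₁0 : l₁ 0 = 0) (hl₁1 : l₁ 1 = 1) (hl₂0 : l₂ 0 = 1) (hl₂1 : l₂ 1 = 0)
    (k₁ k₂ : ℝ) (hk₂ : 0 ≤ k₂) (hk₁₂ : k₂ < k₁)
    (b : ℝ) (hb : b = (k₁ * a + k₂ * a + k₂ * k) / (k₁ - k₂)) (hb0 : 0 ≤ b)
    (T : C(unitInterval, ℝ) → C(unitInterval, ℝ))
    (hT : ∀ (f : C(unitInterval, ℝ)) (x : unitInterval),
      T f x = (k₁ * f (l₁ x) + k₂ * f (l₂ x)) / (k₁ + k₂)) :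
    (∀ f g : C(unitInterval, ℝ), T (f + g) = T f + T g) ∧
    (∀ (c : ℝ) (f : C(unitInterval, ℝ)), T (c • f) = c • T f) ∧
    T 1 = 1 ∧
    (∀ f : C(unitInterval, ℝ), (∀ x, 0 ≤ f x) → ∀ x, 0 ≤ T f x) ∧
    (∀ f : C(unitInterval, ℝ),
      f 0 = (a : ℝ) / ((a : ℝ) + (k : ℝ)) * f 1 →
      T f 0 = b / (b + (k : ℝ)) * T f 1) := by
  have hk₁ : 0 < k₁ := lt_of_le_of_lt hk₂ hk₁₂
  have hsum : 0 < k₁ + k₂ := by linarith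
  have hsum' : k₁ + k₂ ≠ 0 := ne_of_gt hsum
  refine ⟨?_, ?_, ?_, ?_, ?_⟩
  · intro f g
    ext x
    simp only [hT, ContinuousMap.add_apply]
    ring
  · intro c f
    ext x
    simp only [hT, ContinuousMap.smul_apply, smul_eq_mul]
    ring
  · ext x
    simp only [hT, ContinuousMap.one_apply]
    field_simp
  · intro f hf x
    rw [hT]
    apply div_nonneg _ (le_of_lt hsum)
    have := hf (l₁ x)
    have := hf (l₂ x)
    nlinarith
  · intro f hf
    rw [hT, hT, hl₁0, hl₁1, hl₂0, hl₂1, hf]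
    have hak : (0:ℝ) < (a:ℝ) + (k:ℝ) := by positivity
    have hbk : (0:ℝ) < b + (k:ℝ) := by
      have : (0:ℝ) < (k:ℝ) := by exact_mod_cast hk
      linarith
    have hd : k₁ - k₂ ≠ 0 := by linarith
    have hk' : (0:ℝ) < (k:ℝ) := by exact_mod_cast hk
    have ha' : (0:ℝ) < (a:ℝ) := by exact_mod_cast ha
    have hD : (0:ℝ) < k₁ * a + k₂ * a + k₁ * k := by positivity
    have hratio : b / (b + (k:ℝ)) = (k₁ * a + k₂ * a + k₂ * k) / (k₁ * a + k₂ * a + k₁ * k) := by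
      rw [div_eq_div_iff hbk.ne' hD.ne', hb]
      field_simp
      ring
    rw [hratio]
    field_simp
    ring
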